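/- arXiv:1311.6954 — 2 statements merged into one kernel-verified Lean document; each statement's English description precedes it below -/
import Mathlib

section
/- Let h : ℝ → ℝ be bounded and measurable, let Φh = E[h(Z)] where Z is a standard normal random variable, and let f be the solution of the standard normal Stein equation f''(w) − w f'(w) = h(w) − Φh given by f'(w) = −e^{w²/2} ∫_w^∞ (h(t) − Φh) e^{−t²/2} dt. Then sup_{w ∈ ℝ} |w f'(w)| ≤ sup_{t ∈ ℝ} |h(t) − Φh|. -/
open MeasureTheory ProbabilityTheory Real Filter Set

private lemma gauss_int : Integrable (fun t : ℝ => Real.exp (-t ^ 2 / 2)) := by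
  have := integrable_exp_neg_mul_sq (b := (1:ℝ)/2) (by norm_num)
  convert this using 2 with t
  ring_nf

private lemma tgauss_int : Integrable (fun t : ℝ => t * Real.exp (-t ^ 2 / 2)) := by
  have := integrable_mul_exp_neg_mul_sq (b := (1:ℝ)/2) (by norm_num)
  convert this using 2 with t
  ring_nf

private lemma deriv_gauss (x : ℝ) :
    HasDerivAt (fun t : ℝ => -Real.exp (-t ^ 2 / 2)) (x * Real.exp (-x ^ 2 / 2)) x := by
  have h1 : HasDerivAt (fun t : ℝ => -t ^ 2 / 2) (-x) x := by
    have := ((hasDerivAt_pow 2 x).neg).div_const 2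
    refine this.congr_deriv ?_
    push_cast; ring
  have := (h1.exp).neg
  refine this.congr_deriv ?_
  ring

private lemma tendsto_neg_sq_atBot : Tendsto (fun t : ℝ => -t ^ 2 / 2) atTop atBot := by
  apply Tendsto.atBot_div_const (by norm_num)
  exact tendsto_neg_atTop_atBot.comp (tendsto_pow_atTop two_ne_zero)

private lemma tendsto_neg_sq_atBot' : Tendsto (fun t : ℝ => -t ^ 2 / 2) atBot atBot := by
  have heq : (fun t : ℝ => -t ^ 2 / 2) = (fun t : ℝ => -t ^ 2 / 2) ∘ (fun t : ℝ => -t) := by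
    funext t; simp [Function.comp]
  rw [heq]
  exact tendsto_neg_sq_atBot.comp tendsto_neg_atBot_atTop

private lemma int_Ioi_tgauss (w : ℝ) :
    ∫ t in Set.Ioi w, t * Real.exp (-t ^ 2 / 2) = Real.exp (-w ^ 2 / 2) := by
  have := integral_Ioi_of_hasDerivAt_of_tendsto (f := fun t : ℝ => -Real.exp (-t ^ 2 / 2))
    (f' := fun t : ℝ => t * Real.exp (-t ^ 2 / 2)) (a := w) (m := 0)
    ((deriv_gauss w).continuousAt.continuousWithinAt)
    (fun x _ => deriv_gauss x) tgauss_int.integrableOn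
    (by simpa using (Real.tendsto_exp_atBot.comp tendsto_neg_sq_atBot).neg)
  simpa using this

private lemma int_Iic_tgauss (w : ℝ) :
    ∫ t in Set.Iic w, t * Real.exp (-t ^ 2 / 2) = -Real.exp (-w ^ 2 / 2) := by
  have := integral_Iic_of_hasDerivAt_of_tendsto (f := fun t : ℝ => -Real.exp (-t ^ 2 / 2))
    (f' := fun t : ℝ => t * Real.exp (-t ^ 2 / 2)) (a := w) (m := 0)
    ((deriv_gauss w).continuousAt.continuousWithinAt)
    (fun x _ => deriv_gauss x) tgauss_int.integrableOn
    (by simpa using (Real.tendsto_exp_atBot.comp tendsto_neg_sq_atBot').neg)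
  simpa using this

/-- **Lemma 2.1, inequality (2.10).**
For `h : ℝ → ℝ` bounded and measurable, the solution `f` of the standard normal Stein
equation, with `f'(w) = -e^{w²/2} ∫_w^∞ (h(t) - Φh) e^{-t²/2} dt` where `Φh = E h(Z)`,
satisfies `sup_w |w f'(w)| ≤ sup_t |h(t) - Φh|`. -/
theorem stein_solution_wf'_bound
    (h : ℝ → ℝ) (hmeas : Measurable h) (C : ℝ) (hbd : ∀ x, |h x| ≤ C)
    (Φh : ℝ) (hΦh : Φh = ∫ z, h z ∂(gaussianReal 0 1))
    (f : ℝ → ℝ)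
    (hf' : ∀ w, deriv f w =
      -Real.exp (w ^ 2 / 2) * ∫ t in Set.Ioi w, (h t - Φh) * Real.exp (-t ^ 2 / 2)) :
    ∀ w : ℝ, |w * deriv f w| ≤ ⨆ t : ℝ, |h t - Φh| := by
  set M : ℝ := ⨆ t : ℝ, |h t - Φh| with hMdef
  have hφint : Integrable (fun t => (h t - Φh) * Real.exp (-t ^ 2 / 2)) := by
    apply gauss_int.bdd_mul (c := C + |Φh|) ((hmeas.sub measurable_const).aestronglyMeasurable)
    refine Filter.Eventually.of_forall (fun x => ?_)
    rw [Real.norm_eq_abs]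
    calc |h x - Φh| ≤ |h x| + |Φh| := abs_sub _ _
      _ ≤ C + |Φh| := by linarith [hbd x]
  have hbdd : BddAbove (Set.range fun t : ℝ => |h t - Φh|) := by
    refine ⟨C + |Φh|, ?_⟩
    rintro _ ⟨t, rfl⟩
    calc |h t - Φh| ≤ |h t| + |Φh| := abs_sub _ _
      _ ≤ C + |Φh| := by linarith [hbd t]
  have hM : ∀ t, |h t - Φh| ≤ M := fun t => le_ciSup hbdd t
  have hM0 : 0 ≤ M := le_trans (abs_nonneg _) (hM 0)
  have h2π : (Real.sqrt (2 * π)) ≠ 0 := by positivity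
  have hΦh' : Φh = (Real.sqrt (2 * π))⁻¹ * ∫ t, h t * Real.exp (-t ^ 2 / 2) := by
    rw [hΦh, gaussianReal_of_var_ne_zero 0 one_ne_zero]
    have hpdf : gaussianPDF 0 1
        = fun x : ℝ => ((Real.toNNReal (gaussianPDFReal 0 1 x) : NNReal) : ENNReal) := by
      funext x; rfl
    rw [hpdf, integral_withDensity_eq_integral_smul
      ((measurable_gaussianPDFReal 0 1).real_toNNReal) h]
    rw [← integral_const_mul]
    congr 1
    funext x
    rw [NNReal.smul_def, Real.coe_toNNReal _ (gaussianPDFReal_nonneg 0 1 x)]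
    simp only [gaussianPDFReal, smul_eq_mul]
    push_cast
    rw [mul_one, mul_comm (h x)]
    ring_nf
  have hint1 : Integrable (fun t => h t * Real.exp (-t ^ 2 / 2)) :=
    gauss_int.bdd_mul (c := C) hmeas.aestronglyMeasurable (Filter.Eventually.of_forall fun x => by
      simpa [Real.norm_eq_abs] using hbd x)
  have htot : ∫ t, (h t - Φh) * Real.exp (-t ^ 2 / 2) = 0 := by
    have hint2 : Integrable (fun t => Φh * Real.exp (-t ^ 2 / 2)) := gauss_int.const_mul Φh
    have hgauss : ∫ t : ℝ, Real.exp (-t ^ 2 / 2) = Real.sqrt (2 * π) := by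
      have h12 := integral_gaussian (1/2 : ℝ)
      rw [show (fun t : ℝ => Real.exp (-t ^ 2 / 2)) = fun t : ℝ => Real.exp (-(1/2) * t ^ 2) by
        funext t; ring_nf]
      rw [h12]
      rw [show π / (1/2 : ℝ) = 2 * π by ring]
    have hval : ∫ t, h t * Real.exp (-t ^ 2 / 2) = Real.sqrt (2 * π) * Φh := by
      rw [hΦh', ← mul_assoc, mul_inv_cancel₀ h2π, one_mul]
    have hsub : ∫ t, (h t - Φh) * Real.exp (-t ^ 2 / 2)
        = (∫ t, h t * Real.exp (-t ^ 2 / 2)) - ∫ t, Φh * Real.exp (-t ^ 2 / 2) := by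
      rw [← integral_sub hint1 hint2]
      congr 1; funext t; ring
    rw [hsub, integral_const_mul, hgauss, hval]
    ring
  intro w
  rw [hf' w]
  have hE : Real.exp (w ^ 2 / 2) * Real.exp (-w ^ 2 / 2) = 1 := by
    rw [← Real.exp_add]; ring_nf; exact Real.exp_zero
  have hE0 : (0:ℝ) < Real.exp (w ^ 2 / 2) := Real.exp_pos _
  rcases le_or_gt 0 w with hw0 | hw0
  · have hIbound : |∫ t in Set.Ioi w, (h t - Φh) * Real.exp (-t ^ 2 / 2)|
        ≤ M * ∫ t in Set.Ioi w, Real.exp (-t ^ 2 / 2) := by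
      rw [← Real.norm_eq_abs, ← integral_const_mul M fun t => Real.exp (-t ^ 2 / 2)]
      refine norm_integral_le_of_norm_le ((gauss_int.const_mul M).integrableOn) ?_
      filter_upwards with t
      rw [Real.norm_eq_abs, abs_mul, abs_of_pos (Real.exp_pos _)]
      exact mul_le_mul_of_nonneg_right (hM t) (Real.exp_pos _).le
    have hwS : w * ∫ t in Set.Ioi w, Real.exp (-t ^ 2 / 2) ≤ Real.exp (-w ^ 2 / 2) := by
      rw [← integral_const_mul]
      calc ∫ t in Set.Ioi w, w * Real.exp (-t ^ 2 / 2)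
          ≤ ∫ t in Set.Ioi w, t * Real.exp (-t ^ 2 / 2) := by
            refine setIntegral_mono_on ((gauss_int.const_mul w).integrableOn)
              (tgauss_int.integrableOn) measurableSet_Ioi fun t ht => ?_
            exact mul_le_mul_of_nonneg_right (le_of_lt ht) (Real.exp_pos _).le
        _ = Real.exp (-w ^ 2 / 2) := int_Ioi_tgauss w
    have hS0 : 0 ≤ ∫ t in Set.Ioi w, Real.exp (-t ^ 2 / 2) :=
      integral_nonneg fun t => (Real.exp_pos _).le
    rw [abs_mul, abs_mul, abs_neg, abs_of_nonneg hw0, abs_of_pos hE0]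
    calc w * (Real.exp (w ^ 2 / 2) * |∫ t in Set.Ioi w, (h t - Φh) * Real.exp (-t ^ 2 / 2)|)
        ≤ w * (Real.exp (w ^ 2 / 2)
            * (M * ∫ t in Set.Ioi w, Real.exp (-t ^ 2 / 2))) := by gcongr
      _ = Real.exp (w ^ 2 / 2) * M
            * (w * ∫ t in Set.Ioi w, Real.exp (-t ^ 2 / 2)) := by ring
      _ ≤ Real.exp (w ^ 2 / 2) * M * Real.exp (-w ^ 2 / 2) :=
          mul_le_mul_of_nonneg_left hwS (mul_nonneg hE0.le hM0)
      _ = M * (Real.exp (w ^ 2 / 2) * Real.exp (-w ^ 2 / 2)) := by ring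
      _ = M := by rw [hE, mul_one]
  · have hIeq : ∫ t in Set.Ioi w, (h t - Φh) * Real.exp (-t ^ 2 / 2)
        = -∫ t in Set.Iic w, (h t - Φh) * Real.exp (-t ^ 2 / 2) := by
      have hsplit := intervalIntegral.integral_Iic_add_Ioi (b := w) hφint.integrableOn hφint.integrableOn
      rw [htot] at hsplit
      linarith
    have hIbound : |∫ t in Set.Ioi w, (h t - Φh) * Real.exp (-t ^ 2 / 2)|
        ≤ M * ∫ t in Set.Iic w, Real.exp (-t ^ 2 / 2) := by
      rw [hIeq, abs_neg, ← Real.norm_eq_abs, ← integral_const_mul M fun t => Real.exp (-t ^ 2 / 2)]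
      refine norm_integral_le_of_norm_le ((gauss_int.const_mul M).integrableOn) ?_
      filter_upwards with t
      rw [Real.norm_eq_abs, abs_mul, abs_of_pos (Real.exp_pos _)]
      exact mul_le_mul_of_nonneg_right (hM t) (Real.exp_pos _).le
    have hwS : (-w) * ∫ t in Set.Iic w, Real.exp (-t ^ 2 / 2) ≤ Real.exp (-w ^ 2 / 2) := by
      rw [← integral_const_mul]
      calc ∫ t in Set.Iic w, (-w) * Real.exp (-t ^ 2 / 2)
          ≤ ∫ t in Set.Iic w, (-t) * Real.exp (-t ^ 2 / 2) := by
            refine setIntegral_mono_on ((gauss_int.const_mul (-w)).integrableOn)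
              ((tgauss_int.neg.congr (by filter_upwards with t; simp [neg_mul])).integrableOn)
              measurableSet_Iic fun t ht => ?_
            exact mul_le_mul_of_nonneg_right (neg_le_neg ht) (Real.exp_pos _).le
        _ = -∫ t in Set.Iic w, t * Real.exp (-t ^ 2 / 2) := by
            rw [show (fun t : ℝ => -t * Real.exp (-t ^ 2 / 2))
                = fun t : ℝ => -(t * Real.exp (-t ^ 2 / 2)) from by funext t; ring,
              integral_neg]
        _ = Real.exp (-w ^ 2 / 2) := by rw [int_Iic_tgauss]; ring
    rw [abs_mul, abs_mul, abs_neg, abs_of_neg hw0, abs_of_pos hE0]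
    calc -w * (Real.exp (w ^ 2 / 2) * |∫ t in Set.Ioi w, (h t - Φh) * Real.exp (-t ^ 2 / 2)|)
        ≤ -w * (Real.exp (w ^ 2 / 2)
            * (M * ∫ t in Set.Iic w, Real.exp (-t ^ 2 / 2))) :=
          mul_le_mul_of_nonneg_left (mul_le_mul_of_nonneg_left hIbound hE0.le) (by linarith)
      _ = Real.exp (w ^ 2 / 2) * M
            * ((-w) * ∫ t in Set.Iic w, Real.exp (-t ^ 2 / 2)) := by ring
      _ ≤ Real.exp (w ^ 2 / 2) * M * Real.exp (-w ^ 2 / 2) :=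
          mul_le_mul_of_nonneg_left hwS (mul_nonneg hE0.le hM0)
      _ = M * (Real.exp (w ^ 2 / 2) * Real.exp (-w ^ 2 / 2)) := by ring
      _ = M := by rw [hE, mul_one]
end

section
/- For every real number k ≥ 1, the inequalities 1/√k < Γ(k/2) / (√2 · Γ((k+1)/2)) < 1/√(k − 1/2) hold, where Γ denotes the Gamma function. -/
open Real


/-- Midpoint log-convexity of Gamma. -/
lemma gammaAux_sq_midpoint_le {x y : ℝ} (hx : 0 < x) (hy : 0 < y) :
    Real.Gamma ((x + y) / 2) ^ 2 ≤ Real.Gamma x * Real.Gamma y := by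
  have h := Real.convexOn_log_Gamma.2 (Set.mem_Ioi.2 hx) (Set.mem_Ioi.2 hy)
      (by norm_num : (0:ℝ) ≤ 1/2) (by norm_num : (0:ℝ) ≤ 1/2) (by norm_num)
  simp only [Function.comp, smul_eq_mul] at h
  have hmid : (1/2 : ℝ) * x + (1/2 : ℝ) * y = (x + y) / 2 := by ring
  rw [hmid] at h
  have hgx := Real.Gamma_pos_of_pos hx
  have hgy := Real.Gamma_pos_of_pos hy
  have hgm := Real.Gamma_pos_of_pos (by positivity : (0:ℝ) < (x + y)/2)
  have h2 : 2 * Real.log (Real.Gamma ((x+y)/2)) ≤ Real.log (Real.Gamma x) + Real.log (Real.Gamma y) := by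
    linarith
  have := Real.exp_le_exp.2 h2
  rwa [Real.exp_add, Real.exp_log hgx, Real.exp_log hgy, two_mul, Real.exp_add,
    Real.exp_log hgm, ← sq] at this

noncomputable def gammaG (x : ℝ) : ℝ := (Real.Gamma (x + 1/2) / Real.Gamma x) ^ 2

lemma gammaG_pos {x : ℝ} (hx : 0 < x) : 0 < gammaG x := by
  have h1 := Real.Gamma_pos_of_pos hx
  have h2 := Real.Gamma_pos_of_pos (by linarith : (0:ℝ) < x + 1/2)
  unfold gammaG; positivity

/-- Upper bound (non-strict): G x ≤ x. -/
lemma gammaG_le {x : ℝ} (hx : 0 < x) : gammaG x ≤ x := by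
  have h := gammaAux_sq_midpoint_le hx (by linarith : (0:ℝ) < x + 1)
  have hmid : (x + (x+1))/2 = x + 1/2 := by ring
  rw [hmid, Real.Gamma_add_one (ne_of_gt hx)] at h
  have hgx := Real.Gamma_pos_of_pos hx
  unfold gammaG
  rw [div_pow, div_le_iff₀ (by positivity)]
  calc Real.Gamma (x + 1/2) ^ 2 ≤ Real.Gamma x * (x * Real.Gamma x) := h
    _ = x * Real.Gamma x ^ 2 := by ring

/-- Crude lower bound: x - 1/2 ≤ G x for x > 1/2. -/
lemma gammaG_crude {x : ℝ} (hx : 1/2 < x) : x - 1/2 ≤ gammaG x := by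
  have hx0 : (0:ℝ) < x := by linarith
  have hx2 : (0:ℝ) < x - 1/2 := by linarith
  have h := gammaAux_sq_midpoint_le hx2 (by linarith : (0:ℝ) < x + 1/2)
  have hmid : ((x - 1/2) + (x + 1/2))/2 = x := by ring
  rw [hmid] at h
  -- Γ(x+1/2) = (x-1/2) Γ(x-1/2)
  have hrec : Real.Gamma (x + 1/2) = (x - 1/2) * Real.Gamma (x - 1/2) := by
    have := Real.Gamma_add_one (ne_of_gt hx2)
    rw [show x - 1/2 + 1 = x + 1/2 by ring] at this
    exact this
  have hgx := Real.Gamma_pos_of_pos hx0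
  have hgxm := Real.Gamma_pos_of_pos hx2
  have hgxp := Real.Gamma_pos_of_pos (by linarith : (0:ℝ) < x + 1/2)
  unfold gammaG
  rw [div_pow, le_div_iff₀ (by positivity)]
  -- (x-1/2) * Γx² ≤ Γ(x+1/2)²
  -- from Γx² ≤ Γ(x-1/2)Γ(x+1/2) and Γ(x+1/2) = (x-1/2)Γ(x-1/2)
  have : (x - 1/2) * Real.Gamma x ^ 2 ≤ (x - 1/2) * (Real.Gamma (x - 1/2) * Real.Gamma (x + 1/2)) :=
    mul_le_mul_of_nonneg_left h (le_of_lt hx2)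
  calc (x - 1/2) * Real.Gamma x ^ 2
      ≤ (x - 1/2) * (Real.Gamma (x - 1/2) * Real.Gamma (x + 1/2)) := this
    _ = ((x - 1/2) * Real.Gamma (x - 1/2)) * Real.Gamma (x + 1/2) := by ring
    _ = Real.Gamma (x + 1/2) ^ 2 := by rw [← hrec]; ring

/-- Recursion: G x = x² G(x+1) / (x+1/2)². -/
lemma gammaG_rec {x : ℝ} (hx : 0 < x) :
    gammaG x = x^2 * gammaG (x + 1) / (x + 1/2)^2 := by
  have hgx := Real.Gamma_pos_of_pos hx
  have hx2 : (0:ℝ) < x + 1/2 := by linarith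
  have h1 : Real.Gamma (x + 1) = x * Real.Gamma x := Real.Gamma_add_one (ne_of_gt hx)
  have h2 : Real.Gamma (x + 1 + 1/2) = (x + 1/2) * Real.Gamma (x + 1/2) := by
    have := Real.Gamma_add_one (ne_of_gt hx2)
    rw [show x + 1/2 + 1 = x + 1 + 1/2 by ring] at this
    exact this
  unfold gammaG
  rw [h1, h2]
  field_simp

/-- Deficit bound by induction. -/
lemma gammaG_deficit (n : ℕ) : ∀ x : ℝ, 1 ≤ x → x - 1/4 - gammaG x ≤ x / (4 * (x + n)) := by
  induction n with
  | zero =>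
    intro x hx
    have h := gammaG_crude (by linarith : (1:ℝ)/2 < x)
    have hx0 : (0:ℝ) < x := by linarith
    have e : x / (4 * (x + (0:ℕ))) = 1/4 := by push_cast; field_simp; ring
    rw [e]; linarith
  | succ n ih =>
    intro x hx
    have hx0 : (0:ℝ) < x := by linarith
    have hrec := gammaG_rec hx0
    have hih := ih (x + 1) (by linarith)
    -- G x = x² G(x+1)/(x+1/2)², so x - 1/4 - G x = (x²(x+3/4 - G(x+1)) - 1/16)/(x+1/2)²
    have hx2 : (0:ℝ) < (x + 1/2)^2 := by positivity
    have key : x - 1/4 - gammaG x = (x^2 * ((x+1) - 1/4 - gammaG (x+1)) - 1/16) / (x + 1/2)^2 := by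
      rw [hrec]; field_simp; ring
    rw [key]
    have h1 : x^2 * ((x+1) - 1/4 - gammaG (x+1)) ≤ x^2 * ((x+1) / (4 * ((x+1) + n))) :=
      mul_le_mul_of_nonneg_left hih (by positivity)
    have hxn : (0:ℝ) < x + 1 + n := by positivity
    have goalpos : (0:ℝ) < 4 * (x + (n+1:ℕ)) := by positivity
    rw [div_le_div_iff₀ hx2 goalpos]
    push_cast
    have h2 : x^2 * ((x+1) / (4 * ((x+1) + n))) = x^2 * (x+1) / (4 * (x + 1 + n)) := by ring_nf
    -- need: (x²(x+1)/(4(x+1+n)) - 1/16) * (4(x+n+1)) ≤ x * (x+1/2)²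
    have h3 : (x^2 * ((x+1) - 1/4 - gammaG (x+1)) - 1/16) * (4 * (x + (n+1))) ≤
        (x^2 * ((x+1) / (4 * ((x+1) + n))) - 1/16) * (4 * (x + (n+1))) := by
      apply mul_le_mul_of_nonneg_right _ (by positivity)
      linarith
    refine le_trans h3 ?_
    have hd : (0:ℝ) < x + 1 + n := by positivity
    have e : (x^2 * ((x+1) / (4 * ((x+1) + n))) - 1/16) * (4 * (x + ((n:ℝ)+1)))
        = x^2 * (x+1) - (x + ((n:ℝ)+1))/4 := by
      field_simp; ring
    push_cast
    rw [e]
    have hn : (0:ℝ) ≤ n := Nat.cast_nonneg n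
    nlinarith [hn, hx0]

/-- Nonstrict lower bound via limit. -/
lemma gammaG_ge {x : ℝ} (hx : 1 ≤ x) : x - 1/4 ≤ gammaG x := by
  by_contra h
  push_neg at h
  set ε := x - 1/4 - gammaG x with hε
  have hε0 : 0 < ε := by simp [hε]; linarith
  obtain ⟨n, hn⟩ := exists_nat_gt (x / (4 * ε))
  have hd := gammaG_deficit n x hx
  have hx0 : (0:ℝ) < x := by linarith
  have hn0 : (0:ℝ) < x + n := by positivity
  -- ε ≤ x/(4(x+n)) and n > x/(4ε) ⇒ contradiction
  rw [div_lt_iff₀ (by positivity)] at hn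
  rw [le_div_iff₀ (by positivity)] at hd
  rw [← hε] at hd
  nlinarith [mul_pos hε0 hx0]

/-- Strict lower bound: x - 1/4 < G x for x ≥ 1/2. -/
lemma gammaG_gt {x : ℝ} (hx : 1/2 ≤ x) : x - 1/4 < gammaG x := by
  have hx0 : (0:ℝ) < x := by linarith
  have hrec := gammaG_rec hx0
  have hge := gammaG_ge (by linarith : (1:ℝ) ≤ x + 1)
  rw [hrec]
  rw [lt_div_iff₀ (by positivity : (0:ℝ) < (x + 1/2)^2)]
  nlinarith [hge, sq_nonneg x]

/-- Strict upper bound: G x < x for x > 0. -/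
lemma gammaG_lt {x : ℝ} (hx : 0 < x) : gammaG x < x := by
  have hrec := gammaG_rec hx
  have hle := gammaG_le (by linarith : (0:ℝ) < x + 1)
  rw [hrec, div_lt_iff₀ (by positivity : (0:ℝ) < (x + 1/2)^2)]
  nlinarith [hle, sq_nonneg x, gammaG_pos (by linarith : (0:ℝ) < x + 1)]



/-- **Remark 2.2.**
For every real `k ≥ 1`, `1/√k < Γ(k/2)/(√2 Γ((k+1)/2)) < 1/√(k - 1/2)`. -/
theorem gamma_ratio_bounds (k : ℝ) (hk : 1 ≤ k) :
    1 / Real.sqrt k < Real.Gamma (k / 2) / (Real.sqrt 2 * Real.Gamma ((k + 1) / 2)) ∧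
      Real.Gamma (k / 2) / (Real.sqrt 2 * Real.Gamma ((k + 1) / 2))
        < 1 / Real.sqrt (k - 1 / 2) := by
  set x := k / 2 with hxdef
  have hx : (1:ℝ)/2 ≤ x := by simp [hxdef]; linarith
  have hx0 : (0:ℝ) < x := by linarith
  have hkx : (k + 1) / 2 = x + 1/2 := by rw [hxdef]; ring
  have hg1 := Real.Gamma_pos_of_pos hx0
  have hg2 := Real.Gamma_pos_of_pos (by linarith : (0:ℝ) < x + 1/2)
  set f := Real.Gamma (x + 1/2) / Real.Gamma x with hf
  have hf0 : 0 < f := by positivity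
  have hupper : f^2 < x := gammaG_lt hx0
  have hlower : x - 1/4 < f^2 := gammaG_gt hx
  -- ratio = 1/(√2 f)
  have hratio : Real.Gamma (k / 2) / (Real.sqrt 2 * Real.Gamma ((k + 1) / 2))
      = 1 / (Real.sqrt 2 * f) := by
    rw [hkx, hf]
    field_simp
    rw [hxdef]
  rw [hratio]
  have hs2 : (0:ℝ) < Real.sqrt 2 := Real.sqrt_pos.2 (by norm_num)
  constructor
  · -- 1/√k < 1/(√2 f) ⟺ √2 f < √k
    rw [div_lt_div_iff₀ (Real.sqrt_pos.2 (by linarith : (0:ℝ) < k)) (by positivity)]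
    rw [one_mul, one_mul]
    have h1 : (Real.sqrt 2 * f)^2 < k := by
      have : (Real.sqrt 2)^2 = 2 := Real.sq_sqrt (by norm_num)
      calc (Real.sqrt 2 * f)^2 = 2 * f^2 := by rw [mul_pow, this]
        _ < 2 * x := by linarith
        _ = k := by rw [hxdef]; ring
    calc Real.sqrt 2 * f = Real.sqrt ((Real.sqrt 2 * f)^2) := by
          rw [Real.sqrt_sq (by positivity)]
      _ < Real.sqrt k := Real.sqrt_lt_sqrt (by positivity) h1
  · -- 1/(√2 f) < 1/√(k-1/2) ⟺ √(k-1/2) < √2 f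
    have hk2 : (0:ℝ) < k - 1/2 := by linarith
    rw [div_lt_div_iff₀ (by positivity) (Real.sqrt_pos.2 hk2)]
    rw [one_mul, one_mul]
    have h1 : k - 1/2 < (Real.sqrt 2 * f)^2 := by
      have : (Real.sqrt 2)^2 = 2 := Real.sq_sqrt (by norm_num)
      calc k - 1/2 = 2 * (x - 1/4) := by rw [hxdef]; ring
        _ < 2 * f^2 := by linarith
        _ = (Real.sqrt 2 * f)^2 := by rw [mul_pow, this]
    calc Real.sqrt (k - 1/2) < Real.sqrt ((Real.sqrt 2 * f)^2) :=
          Real.sqrt_lt_sqrt (le_of_lt hk2) h1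
      _ = Real.sqrt 2 * f := Real.sqrt_sq (by positivity)
end
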